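/- For all reals θ > 0 and ε > 0 there exists M > 0 such that for every real y with |y| ≥ M, e^{−(π/2 + ε)|y|} ≤ |Γ(θ + iy)| ≤ e^{−(π/2 − ε)|y|}, where Γ is the complex Gamma function. -/

import Mathlib

open Complex Real Filter

lemma abs_gammaSeq_eq (x y : ℝ) (n : ℕ) (hn : n ≠ 0) :
    ‖Complex.GammaSeq (↑x + ↑y * I) n‖ =
      ((n : ℝ) ^ x * (n.factorial : ℝ)) / ∏ j ∈ Finset.range (n + 1),
        Real.sqrt ((x + j) ^ 2 + y ^ 2) := by
  rw [Complex.GammaSeq, norm_div, norm_mul, norm_prod]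
  have hn' : (0:ℝ) < n := by positivity
  rw [show ((n:ℂ)) = ((n:ℝ):ℂ) by push_cast; ring,
    Complex.norm_cpow_eq_rpow_re_of_pos hn']
  simp only [Complex.add_re, Complex.ofReal_re, Complex.mul_re, Complex.I_re, Complex.I_im,
    Complex.ofReal_im, Complex.norm_natCast]
  norm_num
  congr 1
  refine Finset.prod_congr rfl fun j _ => ?_
  rw [show (↑x + ↑y * I + (j:ℂ)) = ((x + (j:ℝ) : ℝ) : ℂ) + (y:ℝ) * I by push_cast; ring,
    Complex.norm_add_mul_I]

lemma sqrt_factor_mono {a b y : ℝ} (ha : 0 < a) (hab : a ≤ b) :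
    Real.sqrt (b ^ 2 + y ^ 2) * a ≤ Real.sqrt (a ^ 2 + y ^ 2) * b := by
  rw [show Real.sqrt (b ^ 2 + y ^ 2) * a = Real.sqrt ((b ^ 2 + y ^ 2) * a ^ 2) by
      rw [Real.sqrt_mul (by positivity), Real.sqrt_sq ha.le],
    show Real.sqrt (a ^ 2 + y ^ 2) * b = Real.sqrt ((a ^ 2 + y ^ 2) * b ^ 2) by
      rw [Real.sqrt_mul (by positivity), Real.sqrt_sq (ha.trans_le hab).le]]
  apply Real.sqrt_le_sqrt
  nlinarith [sq_nonneg y, mul_le_mul hab hab ha.le (ha.trans_le hab).le]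

lemma gammaSeq_cross {x₁ x₂ : ℝ} (y : ℝ) (h1 : 0 < x₁) (h12 : x₁ ≤ x₂) (n : ℕ) (hn : n ≠ 0) :
    ‖Complex.GammaSeq (↑x₁ + ↑y * I) n‖ * Real.GammaSeq x₂ n ≤
      ‖Complex.GammaSeq (↑x₂ + ↑y * I) n‖ * Real.GammaSeq x₁ n := by
  have h2 : 0 < x₂ := h1.trans_le h12
  rw [abs_gammaSeq_eq _ _ _ hn, abs_gammaSeq_eq _ _ _ hn, Real.GammaSeq, Real.GammaSeq]
  have hn' : (0:ℝ) < n := by positivity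
  set A₁ : ℝ := (n:ℝ) ^ x₁ * n.factorial with hA₁
  set A₂ : ℝ := (n:ℝ) ^ x₂ * n.factorial with hA₂
  have hA1 : 0 < A₁ := by positivity
  have hA2 : 0 < A₂ := by positivity
  have hQ : ∀ x : ℝ, 0 < x → 0 < ∏ j ∈ Finset.range (n + 1), Real.sqrt ((x + j) ^ 2 + y ^ 2) := by
    intro x hx
    apply Finset.prod_pos
    intro j _
    have : (0:ℝ) < x + j := by positivity
    positivity
  have hP : ∀ x : ℝ, 0 < x → 0 < ∏ j ∈ Finset.range (n + 1), (x + j) := by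
    intro x hx
    apply Finset.prod_pos
    intro j _
    positivity
  have key : (∏ j ∈ Finset.range (n + 1), Real.sqrt ((x₂ + j) ^ 2 + y ^ 2)) *
      (∏ j ∈ Finset.range (n + 1), (x₁ + j)) ≤
      (∏ j ∈ Finset.range (n + 1), Real.sqrt ((x₁ + j) ^ 2 + y ^ 2)) *
      (∏ j ∈ Finset.range (n + 1), (x₂ + j)) := by
    rw [← Finset.prod_mul_distrib, ← Finset.prod_mul_distrib]
    apply Finset.prod_le_prod
    · intro j _
      have : (0:ℝ) < x₁ + j := by positivity
      positivity
    · intro j _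
      exact sqrt_factor_mono (by positivity) (by linarith)
  calc A₁ / (∏ j ∈ Finset.range (n + 1), Real.sqrt ((x₁ + j) ^ 2 + y ^ 2)) *
        (A₂ / ∏ j ∈ Finset.range (n + 1), (x₂ + j))
      = (A₁ * A₂) / ((∏ j ∈ Finset.range (n + 1), Real.sqrt ((x₁ + j) ^ 2 + y ^ 2)) *
          ∏ j ∈ Finset.range (n + 1), (x₂ + j)) := by ring
    _ ≤ (A₁ * A₂) / ((∏ j ∈ Finset.range (n + 1), Real.sqrt ((x₂ + j) ^ 2 + y ^ 2)) *
          ∏ j ∈ Finset.range (n + 1), (x₁ + j)) := by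
        apply div_le_div_of_nonneg_left (by positivity)
          (by exact mul_pos (hQ _ h2) (hP _ h1)) key
    _ = A₂ / (∏ j ∈ Finset.range (n + 1), Real.sqrt ((x₂ + j) ^ 2 + y ^ 2)) *
        (A₁ / ∏ j ∈ Finset.range (n + 1), (x₁ + j)) := by ring

lemma abs_Gamma_ratio_mono {x₁ x₂ : ℝ} (y : ℝ) (h1 : 0 < x₁) (h12 : x₁ ≤ x₂) :
    ‖Complex.Gamma (↑x₁ + ↑y * I)‖ * Real.Gamma x₂ ≤
      ‖Complex.Gamma (↑x₂ + ↑y * I)‖ * Real.Gamma x₁ := by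
  have t1 : Tendsto (fun n => ‖Complex.GammaSeq (↑x₁ + ↑y * I) n‖ * Real.GammaSeq x₂ n)
      atTop (nhds (‖Complex.Gamma (↑x₁ + ↑y * I)‖ * Real.Gamma x₂)) :=
    ((continuous_norm.tendsto _).comp (Complex.GammaSeq_tendsto_Gamma _)).mul
      (Real.GammaSeq_tendsto_Gamma _)
  have t2 : Tendsto (fun n => ‖Complex.GammaSeq (↑x₂ + ↑y * I) n‖ * Real.GammaSeq x₁ n)
      atTop (nhds (‖Complex.Gamma (↑x₂ + ↑y * I)‖ * Real.Gamma x₁)) :=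
    ((continuous_norm.tendsto _).comp (Complex.GammaSeq_tendsto_Gamma _)).mul
      (Real.GammaSeq_tendsto_Gamma _)
  refine le_of_tendsto_of_tendsto t1 t2 ?_
  filter_upwards [eventually_ne_atTop 0] with n hn
  exact gammaSeq_cross y h1 h12 n hn

lemma abs_Gamma_half (y : ℝ) :
    ‖Complex.Gamma ((1/2 : ℝ) + ↑y * I)‖ ^ 2 = π / Real.cosh (π * y) := by
  set z : ℂ := (1/2 : ℝ) + ↑y * I with hz
  have h1 : (1 : ℂ) - z = (starRingEnd ℂ) z := by
    rw [hz]
    simp [Complex.ext_iff]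
    norm_num
  have h2 : Complex.Gamma z * Complex.Gamma (1 - z) = ↑π / Complex.sin (↑π * z) :=
    Complex.Gamma_mul_Gamma_one_sub z
  rw [h1, Complex.Gamma_conj, Complex.mul_conj] at h2
  have h3 : Complex.sin (↑π * z) = ↑(Real.cosh (π * y)) := by
    rw [hz]
    push_cast
    rw [show (↑π * ((1:ℂ)/2 + ↑y * I)) = ↑π/2 + (↑π * ↑y) * I by ring]
    rw [Complex.sin_add, Complex.sin_pi_div_two, Complex.cos_pi_div_two]
    rw [Complex.cos_mul_I]
    push_cast [Complex.ofReal_cosh]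
    ring
  rw [h3] at h2
  have h4 : (Complex.normSq (Complex.Gamma z) : ℝ) = π / Real.cosh (π * y) := by
    have := h2
    have hc : (0:ℝ) < Real.cosh (π * y) := (Real.cosh_pos _)
    have : ((Complex.normSq (Complex.Gamma z) : ℂ)) = ((π / Real.cosh (π * y) : ℝ) : ℂ) := by
      rw [this]; push_cast; ring
    exact_mod_cast this
  rw [← Complex.sq_norm] at h4
  exact h4

lemma le_of_sq_le {a b : ℝ} (ha : 0 ≤ a) (hb : 0 ≤ b) (h : a^2 ≤ b^2) : a ≤ b := by
  nlinarith

lemma abs_Gamma_half' (y : ℝ) :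
    ‖Complex.Gamma ((1/2 : ℝ) + ↑y * I)‖ ^ 2 = π / Real.cosh (π * |y|) := by
  rw [show π * |y| = |π * y| by rw [abs_mul, abs_of_pos Real.pi_pos], Real.cosh_abs]
  exact abs_Gamma_half y

lemma abs_Gamma_half_le (y : ℝ) :
    ‖Complex.Gamma ((1/2 : ℝ) + ↑y * I)‖ ≤
      Real.sqrt (2*π) * Real.exp (-(π/2) * |y|) := by
  apply le_of_sq_le (by positivity) (by positivity)
  rw [abs_Gamma_half']
  have h1 : (0:ℝ) ≤ π * |y| := by positivity
  have h2 : Real.exp (π * |y|) / 2 ≤ Real.cosh (π * |y|) := by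
    rw [Real.cosh_eq]
    have := Real.exp_pos (-(π * |y|))
    linarith
  have h3 : π / Real.cosh (π * |y|) ≤ π / (Real.exp (π * |y|) / 2) := by
    apply div_le_div_of_nonneg_left Real.pi_pos.le (by positivity) h2
  refine h3.trans (le_of_eq ?_)
  rw [mul_pow, Real.sq_sqrt (by positivity), ← Real.exp_nat_mul,
    show ((2:ℕ):ℝ) * (-(π/2) * |y|) = -(π * |y|) by push_cast; ring, Real.exp_neg,
    div_div_eq_mul_div, div_eq_mul_inv]
  ring

lemma le_abs_Gamma_half (y : ℝ) :
    Real.sqrt π * Real.exp (-(π/2) * |y|) ≤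
      ‖Complex.Gamma ((1/2 : ℝ) + ↑y * I)‖ := by
  apply le_of_sq_le (by positivity) (by positivity)
  rw [abs_Gamma_half']
  have h2 : Real.cosh (π * |y|) ≤ Real.exp (π * |y|) := by
    rw [Real.cosh_eq]
    have h1 : (0:ℝ) ≤ π * |y| := by positivity
    have := Real.exp_le_exp.mpr (neg_le_self h1)
    nlinarith [Real.exp_pos (π * |y|)]
  have h3 : π / Real.exp (π * |y|) ≤ π / Real.cosh (π * |y|) :=
    div_le_div_of_nonneg_left Real.pi_pos.le (Real.cosh_pos _) h2
  refine le_trans (le_of_eq ?_) h3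
  rw [mul_pow, Real.sq_sqrt Real.pi_pos.le, ← Real.exp_nat_mul,
    show ((2:ℕ):ℝ) * (-(π/2) * |y|) = -(π * |y|) by push_cast; ring, Real.exp_neg,
    div_eq_mul_inv]

lemma abs_Gamma_nat_half (y : ℝ) (n : ℕ) :
    ‖Complex.Gamma (((n:ℝ) + 1/2 : ℝ) + ↑y * I)‖ ≤
      ‖Complex.Gamma ((1/2 : ℝ) + ↑y * I)‖ * (((n:ℝ) + 1) * (1 + |y|)) ^ n := by
  induction n with
  | zero => simp
  | succ n ih =>
    have hy : (0:ℝ) ≤ |y| := abs_nonneg y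
    set s : ℂ := ((n:ℝ) + 1/2 : ℝ) + ↑y * I with hs
    have hsne : s ≠ 0 := by
      intro h
      have := congrArg Complex.re h
      simp [hs] at this
      linarith
    have heq : (((↑(n+1) : ℝ) + 1/2 : ℝ) : ℂ) + ↑y * I = s + 1 := by
      rw [hs]; push_cast; ring
    rw [heq, Complex.Gamma_add_one s hsne, norm_mul]
    have habs : ‖s‖ ≤ ((n:ℝ) + 1) * (1 + |y|) := by
      rw [hs]
      refine le_trans (norm_add_le _ _) ?_
      rw [Complex.norm_real, Real.norm_eq_abs, norm_mul, Complex.norm_real, Real.norm_eq_abs, Complex.norm_I, mul_one]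
      rw [abs_of_pos (by positivity : (0:ℝ) < (n:ℝ) + 1/2)]
      nlinarith
    have hb : ((n:ℝ) + 1) * (1 + |y|) ≤ ((n:ℝ) + 2) * (1 + |y|) := by nlinarith
    calc ‖s‖ * ‖Complex.Gamma s‖
        ≤ (((n:ℝ) + 2) * (1 + |y|)) *
          (‖Complex.Gamma ((1/2 : ℝ) + ↑y * I)‖ * (((n:ℝ) + 1) * (1 + |y|)) ^ n) := by
          exact mul_le_mul (habs.trans hb) ih (by positivity) (by positivity)
      _ ≤ (((n:ℝ) + 2) * (1 + |y|)) *
          (‖Complex.Gamma ((1/2 : ℝ) + ↑y * I)‖ * (((n:ℝ) + 2) * (1 + |y|)) ^ n) := by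
          have := pow_le_pow_left₀ (by positivity : (0:ℝ) ≤ ((n:ℝ)+1) * (1+|y|)) hb n
          gcongr
      _ = ‖Complex.Gamma ((1/2 : ℝ) + ↑y * I)‖ *
          (((↑(n+1):ℝ) + 1) * (1 + |y|)) ^ (n+1) := by
          push_cast
          ring

-- sandwich claim
lemma gamma_sandwich (θ : ℝ) (hθ : 0 < θ) :
    ∃ (c C : ℝ) (k : ℕ), 0 < c ∧ 0 < C ∧ ∀ y : ℝ, 1 ≤ |y| →
      c / (1 + |y|) * Real.exp (-(π/2) * |y|) ≤
          ‖Complex.Gamma ((θ : ℂ) + ↑y * I)‖ ∧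
        ‖Complex.Gamma ((θ : ℂ) + ↑y * I)‖ ≤
          C * (1 + |y|) ^ k * Real.exp (-(π/2) * |y|) := by
  set θ' : ℝ := θ + 1 with hθ'
  have hθ'pos : 0 < θ' := by positivity
  have hθ'half : (1/2 : ℝ) ≤ θ' := by linarith
  obtain ⟨n, hn⟩ : ∃ n : ℕ, θ' ≤ (n:ℝ) + 1/2 := ⟨⌈θ'⌉₊, by
    have := Nat.le_ceil θ'; linarith⟩
  have hGθ' : 0 < Real.Gamma θ' := Real.Gamma_pos_of_pos hθ'pos
  have hGhalf : 0 < Real.Gamma (1/2) := Real.Gamma_pos_of_pos (by norm_num)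
  have hGn : 0 < Real.Gamma ((n:ℝ) + 1/2) := Real.Gamma_pos_of_pos (by positivity)
  refine ⟨Real.Gamma θ' * Real.sqrt π / (Real.Gamma (1/2) * (1 + θ)),
    Real.Gamma θ' / Real.Gamma ((n:ℝ) + 1/2) * Real.sqrt (2*π) * ((n:ℝ)+1)^n, n,
    by positivity, by positivity, ?_⟩
  intro y hy
  have hy0 : (0:ℝ) ≤ |y| := abs_nonneg y
  -- relation between Γ(θ+iy) and Γ(θ'+iy)
  have hzne : ((θ:ℂ) + ↑y * I) ≠ 0 := by
    intro h
    have := congrArg Complex.re h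
    simp at this
    linarith
  have hrec : Complex.Gamma ((θ':ℝ) + ↑y * I) = ((θ:ℂ) + ↑y * I) * Complex.Gamma ((θ:ℂ) + ↑y * I) := by
    rw [show ((θ':ℝ) : ℂ) + ↑y * I = ((θ:ℂ) + ↑y * I) + 1 by rw [hθ']; push_cast; ring]
    exact Complex.Gamma_add_one _ hzne
  have habs_rec : ‖Complex.Gamma ((θ':ℝ) + ↑y * I)‖ =
      ‖(θ:ℂ) + ↑y * I‖ * ‖Complex.Gamma ((θ:ℂ) + ↑y * I)‖ := by
    rw [hrec, norm_mul]
  have habs_lb : (1:ℝ) ≤ ‖(θ:ℂ) + ↑y * I‖ := by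
    refine le_trans hy ?_
    have := Complex.abs_im_le_norm ((θ:ℂ) + ↑y * I)
    simpa using this
  have habs_ub : ‖(θ:ℂ) + ↑y * I‖ ≤ (1 + θ) * (1 + |y|) := by
    refine le_trans (norm_add_le _ _) ?_
    rw [Complex.norm_real, Real.norm_eq_abs, norm_mul, Complex.norm_real, Real.norm_eq_abs, Complex.norm_I, mul_one,
      abs_of_pos hθ]
    nlinarith
  -- bounds on Γ(θ'+iy)
  have hlow' : Real.Gamma θ' / Real.Gamma (1/2) * (Real.sqrt π * Real.exp (-(π/2) * |y|)) ≤
      ‖Complex.Gamma ((θ':ℝ) + ↑y * I)‖ := by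
    have h := abs_Gamma_ratio_mono (x₁ := 1/2) (x₂ := θ') y (by norm_num) hθ'half
    have h2 := le_abs_Gamma_half y
    rw [div_mul_eq_mul_div, div_le_iff₀ hGhalf]
    calc Real.Gamma θ' * (Real.sqrt π * Real.exp (-(π/2) * |y|))
        ≤ Real.Gamma θ' * ‖Complex.Gamma ((1/2:ℝ) + ↑y * I)‖ := by
          have := mul_le_mul_of_nonneg_left h2 hGθ'.le
          linarith
      _ = ‖Complex.Gamma ((1/2:ℝ) + ↑y * I)‖ * Real.Gamma θ' := by ring
      _ ≤ ‖Complex.Gamma ((θ':ℝ) + ↑y * I)‖ * Real.Gamma (1/2) := h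
  have hupp' : ‖Complex.Gamma ((θ':ℝ) + ↑y * I)‖ ≤
      Real.Gamma θ' / Real.Gamma ((n:ℝ) + 1/2) *
        (Real.sqrt (2*π) * Real.exp (-(π/2) * |y|)) * (((n:ℝ)+1) * (1 + |y|))^n := by
    have h := abs_Gamma_ratio_mono (x₁ := θ') (x₂ := (n:ℝ) + 1/2) y hθ'pos hn
    have h2 := abs_Gamma_nat_half y n
    have h3 := abs_Gamma_half_le y
    have h4 : ‖Complex.Gamma (((n:ℝ) + 1/2 : ℝ) + ↑y * I)‖ ≤
        Real.sqrt (2*π) * Real.exp (-(π/2) * |y|) * (((n:ℝ)+1) * (1 + |y|))^n := by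
      refine h2.trans ?_
      gcongr
    calc ‖Complex.Gamma ((θ':ℝ) + ↑y * I)‖
        = ‖Complex.Gamma ((θ':ℝ) + ↑y * I)‖ * Real.Gamma ((n:ℝ) + 1/2) /
            Real.Gamma ((n:ℝ) + 1/2) := by field_simp
      _ ≤ ‖Complex.Gamma (((n:ℝ) + 1/2 : ℝ) + ↑y * I)‖ * Real.Gamma θ' /
            Real.Gamma ((n:ℝ) + 1/2) := by gcongr
      _ ≤ (Real.sqrt (2*π) * Real.exp (-(π/2) * |y|) * (((n:ℝ)+1) * (1 + |y|))^n) *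
            Real.Gamma θ' / Real.Gamma ((n:ℝ) + 1/2) := by gcongr
      _ = Real.Gamma θ' / Real.Gamma ((n:ℝ) + 1/2) *
            (Real.sqrt (2*π) * Real.exp (-(π/2) * |y|)) * (((n:ℝ)+1) * (1 + |y|))^n := by
          ring
  constructor
  · -- lower bound
    have h5 : ‖Complex.Gamma ((θ:ℂ) + ↑y * I)‖ =
        ‖Complex.Gamma ((θ':ℝ) + ↑y * I)‖ / ‖(θ:ℂ) + ↑y * I‖ := by
      rw [habs_rec]
      field_simp
    rw [h5]
    rw [div_mul_eq_mul_div, div_le_div_iff₀ (by positivity) (by positivity)]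
    calc Real.Gamma θ' * Real.sqrt π / (Real.Gamma (1/2) * (1 + θ)) *
          Real.exp (-(π/2) * |y|) * ‖(θ:ℂ) + ↑y * I‖
        ≤ Real.Gamma θ' * Real.sqrt π / (Real.Gamma (1/2) * (1 + θ)) *
          Real.exp (-(π/2) * |y|) * ((1 + θ) * (1 + |y|)) := by gcongr
      _ = Real.Gamma θ' / Real.Gamma (1/2) * (Real.sqrt π * Real.exp (-(π/2) * |y|)) *
          (1 + |y|) := by field_simp
      _ ≤ ‖Complex.Gamma ((θ':ℝ) + ↑y * I)‖ * (1 + |y|) := by gcongr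
  · -- upper bound
    have h6 : ‖Complex.Gamma ((θ:ℂ) + ↑y * I)‖ ≤
        ‖Complex.Gamma ((θ':ℝ) + ↑y * I)‖ := by
      rw [habs_rec]
      nlinarith [norm_nonneg (Complex.Gamma ((θ:ℂ) + ↑y * I))]
    refine h6.trans (hupp'.trans (le_of_eq ?_))
    rw [mul_pow]
    ring

lemma eventually_poly_le (C : ℝ) (k : ℕ) {ε δ : ℝ} (hε : 0 < ε) (hδ : 0 < δ) :
    ∀ᶠ t in atTop, C * (1 + t) ^ k * Real.exp (-ε * t) ≤ δ := by
  have h0 : Tendsto (fun x : ℝ => x ^ (k:ℝ) * Real.exp (-ε * x)) atTop (nhds 0) :=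
    tendsto_rpow_mul_exp_neg_mul_atTop_nhds_zero k ε hε
  have h1 : Tendsto (fun t : ℝ => (1 + t)) atTop atTop :=
    tendsto_atTop_add_const_left _ _ tendsto_id
  have h2 : Tendsto (fun t : ℝ => (1 + t) ^ (k:ℝ) * Real.exp (-ε * (1 + t))) atTop (nhds 0) :=
    h0.comp h1
  have h3 : Tendsto (fun t : ℝ => C * Real.exp ε *
      ((1 + t) ^ (k:ℝ) * Real.exp (-ε * (1 + t)))) atTop (nhds 0) := by
    simpa using h2.const_mul (C * Real.exp ε)
  have h4 : Tendsto (fun t : ℝ => C * (1 + t) ^ k * Real.exp (-ε * t)) atTop (nhds 0) := by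
    refine h3.congr' ?_
    filter_upwards [eventually_ge_atTop (0:ℝ)] with t ht
    rw [Real.rpow_natCast,
      show C * Real.exp ε * ((1 + t) ^ k * Real.exp (-ε * (1 + t))) =
        C * (1 + t) ^ k * (Real.exp ε * Real.exp (-ε * (1 + t))) by ring,
      ← Real.exp_add, show ε + -ε * (1 + t) = -ε * t by ring]
  have := h4.eventually (eventually_le_nhds hδ)
  simpa using this

lemma gamma_asymptotic_bounds_aux (θ ε : ℝ) (hε : 0 < ε)
    (sandwich : ∃ (c C : ℝ) (k : ℕ), 0 < c ∧ 0 < C ∧ ∀ y : ℝ, 1 ≤ |y| →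
      c / (1 + |y|) * Real.exp (-(π/2) * |y|) ≤
          ‖Complex.Gamma ((θ : ℂ) + ↑y * I)‖ ∧
        ‖Complex.Gamma ((θ : ℂ) + ↑y * I)‖ ≤
          C * (1 + |y|) ^ k * Real.exp (-(π/2) * |y|)) :
    ∃ M : ℝ, 0 < M ∧ ∀ y : ℝ, M ≤ |y| →
      Real.exp (-(π / 2 + ε) * |y|) ≤ ‖Complex.Gamma ((θ : ℂ) + y * I)‖ ∧
      ‖Complex.Gamma ((θ : ℂ) + y * I)‖ ≤ Real.exp (-(π / 2 - ε) * |y|) := by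
  obtain ⟨c, C, k, hc, hC, hbd⟩ := sandwich
  have e1 := eventually_poly_le 1 1 hε hc
  have e2 := eventually_poly_le C k hε (one_pos)
  obtain ⟨M₀, hM₀⟩ := (e1.and e2).exists_forall_of_atTop
  refine ⟨max M₀ 1, lt_of_lt_of_le one_pos (le_max_right _ _), ?_⟩
  intro y hy
  set t := |y| with ht
  have ht1 : (1:ℝ) ≤ t := le_trans (le_max_right _ _) hy
  have ht0 : (0:ℝ) < 1 + t := by linarith
  have htM : M₀ ≤ t := le_trans (le_max_left _ _) hy
  obtain ⟨hp1, hp2⟩ := hM₀ t htM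
  obtain ⟨hl, hu⟩ := hbd y ht1
  constructor
  · refine le_trans ?_ hl
    have : Real.exp (-(π/2 + ε) * t) = Real.exp (-ε * t) * Real.exp (-(π/2) * t) := by
      rw [← Real.exp_add]; ring_nf
    rw [this]
    have hee : Real.exp (-ε * t) ≤ c / (1 + t) := by
      rw [le_div_iff₀ ht0]
      calc Real.exp (-ε * t) * (1 + t) = 1 * (1 + t) ^ 1 * Real.exp (-ε * t) := by ring
        _ ≤ c := hp1
    exact mul_le_mul_of_nonneg_right hee (Real.exp_pos _).le
  · refine hu.trans ?_
    have : Real.exp (-(π/2 - ε) * t) = Real.exp (ε * t) * Real.exp (-(π/2) * t) := by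
      rw [← Real.exp_add]; ring_nf
    rw [this]
    have hee : C * (1 + t) ^ k ≤ Real.exp (ε * t) := by
      calc C * (1 + t) ^ k
          = C * (1 + t) ^ k * Real.exp (-ε * t) * Real.exp (ε * t) := by
            rw [mul_assoc, ← Real.exp_add, show -ε * t + ε * t = 0 by ring,
              Real.exp_zero, mul_one]
        _ ≤ 1 * Real.exp (ε * t) := mul_le_mul_of_nonneg_right hp2 (Real.exp_pos _).le
        _ = Real.exp (ε * t) := one_mul _
    exact mul_le_mul_of_nonneg_right hee (Real.exp_pos _).le

/-- For all `θ > 0` and `ε > 0` there exists `M > 0` such that for `|y| ≥ M`,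
`e^{−(π/2+ε)|y|} ≤ |Γ(θ + iy)| ≤ e^{−(π/2−ε)|y|}`. -/
theorem gamma_asymptotic_bounds (θ ε : ℝ) (hθ : 0 < θ) (hε : 0 < ε) :
    ∃ M : ℝ, 0 < M ∧ ∀ y : ℝ, M ≤ |y| →
      Real.exp (-(π / 2 + ε) * |y|) ≤ ‖Complex.Gamma ((θ : ℂ) + y * I)‖ ∧
      ‖Complex.Gamma ((θ : ℂ) + y * I)‖ ≤ Real.exp (-(π / 2 - ε) * |y|) :=
  gamma_asymptotic_bounds_aux θ ε hε (gamma_sandwich θ hθ)
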